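/- Let G be a linearly ordered commutative group and X a set. Let f : ι → (X → G) and g : κ → (X → G) be families of functions indexed by finite nonempty types ι and κ. Then the corner locus of the product family (indexed by ι × κ, sending (i, j) to the pointwise product f_i · g_j) equals Cor(f) ∪ Cor(g), the union of the corner loci of the two families. (Together with the trivial identity Cor(f) ∩ Cor(g) = Cor of the disjoint-union family, this shows finite unions and intersections of finitely generated corner loci are finitely generated corner loci.) -/

import Mathlib

/-- `x` is a corner root of the family `f` if two distinct members agree at `x` and
dominate all other members there. -/
def IsCornerRoot {X A ι : Type*} [LinearOrder A] (f : ι → X → A) (x : X) : Prop :=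
  ∃ i j : ι, i ≠ j ∧ f i x = f j x ∧ ∀ l : ι, f l x ≤ f i x

/-- The corner locus of the product family `{fᵢ · gⱼ}` is the union of the corner loci of
the two families. -/
theorem corner_locus_of_product_family {A X : Type*} [CommGroup A] [LinearOrder A] [IsOrderedMonoid A]
    {ι κ : Type*} [Fintype ι] [Nonempty ι] [Fintype κ] [Nonempty κ]
    (f : ι → X → A) (g : κ → X → A) :
    {x : X | IsCornerRoot (fun p : ι × κ => fun y => f p.1 y * g p.2 y) x}
      = {x : X | IsCornerRoot f x} ∪ {x : X | IsCornerRoot g x} := by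
  ext x
  simp only [Set.mem_setOf_eq, Set.mem_union]
  constructor
  · rintro ⟨⟨i, j⟩, ⟨i', j'⟩, hne, heq, hle⟩
    -- g m ≤ g j for all m, and f l ≤ f i for all l
    have hg : ∀ m, g m x ≤ g j x := fun m => by
      have := hle (i, m); simpa using le_of_mul_le_mul_left' this
    have hf : ∀ l, f l x ≤ f i x := fun l => by
      have := hle (l, j)
      simpa using le_of_mul_le_mul_right' this
    have hfi : f i' x = f i x :=
      le_antisymm (hf i') (by
        by_contra h
        push_neg at h
        exact absurd heq (ne_of_gt (mul_lt_mul_of_lt_of_le h (hg j'))))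
    have heq' : f i x * g j x = f i' x * g j' x := heq
    have hgj : g j' x = g j x := by
      rw [hfi] at heq'
      exact (mul_left_cancel heq'.symm)
    by_cases hii : i = i'
    · have hjj : j ≠ j' := fun h => hne (by simp [hii, h])
      exact Or.inr ⟨j, j', hjj, hgj.symm, hg⟩
    · exact Or.inl ⟨i, i', hii, hfi.symm, hf⟩
  · rintro (⟨i, i', hne, heq, hle⟩ | ⟨j, j', hne, heq, hle⟩)
    · obtain ⟨k, hk⟩ := Finite.exists_max (fun m => g m x)
      refine ⟨(i, k), (i', k), fun h => hne (by simpa using congrArg Prod.fst h),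
        by simp [heq], fun ⟨l, m⟩ => mul_le_mul' (hle l) (hk m)⟩
    · obtain ⟨k, hk⟩ := Finite.exists_max (fun l => f l x)
      refine ⟨(k, j), (k, j'), fun h => hne (by simpa using congrArg Prod.snd h),
        by simp [heq], fun ⟨l, m⟩ => mul_le_mul' (hk l) (hle m)⟩
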